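/- With \phi : B_2 \to A_3 = S_4 given by \phi(r_1) = s_1 s_3, \phi(r_2) = s_2, the unfolding polynomial satisfies U(q) := \sum_{w \in B_2} q^{\ell_A(\phi(w))} = [2]_q [3]_{-q} [4]_q, where [k]_x = 1 + x + \dots + x^{k-1}. -/

import Mathlib

open Polynomial

/-- Generators of `S₄` as adjacent transpositions. -/
def gA : Fin 3 → Equiv.Perm (Fin 4) := ![Equiv.swap 0 1, Equiv.swap 1 2, Equiv.swap 2 3]

lemma gA_liftable : CoxeterMatrix.IsLiftable (CoxeterMatrix.Aₙ 3) gA := by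
  intro i i'
  fin_cases i <;> fin_cases i' <;> decide

/-- All products of `k` generators of `S₄`. -/
def prodsA : ℕ → Finset (Equiv.Perm (Fin 4))
  | 0 => {1}
  | (k+1) => (Finset.univ : Finset (Fin 3)).biUnion (fun i => (prodsA k).image (gA i * ·))

lemma mem_prodsA : ∀ ω : List (Fin 3), (ω.map gA).prod ∈ prodsA ω.length := by
  intro ω
  induction ω with
  | nil => simp [prodsA]
  | cons i ω ih =>
    simp only [List.map_cons, List.prod_cons, List.length_cons, prodsA, Finset.mem_biUnion]
    exact ⟨i, Finset.mem_univ i, Finset.mem_image_of_mem _ ih⟩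

lemma piA_wordProd {WA : Type*} [Group WA] (csA : CoxeterSystem (CoxeterMatrix.Aₙ 3) WA)
    (ω : List (Fin 3)) :
    (csA.lift ⟨gA, gA_liftable⟩) (csA.wordProd ω) = (ω.map gA).prod := by
  rw [CoxeterSystem.wordProd, map_list_prod, List.map_map]
  congr 1
  apply List.map_congr_left
  intro i _
  exact csA.lift_apply_simple gA_liftable i

lemma lenA_eq {WA : Type*} [Group WA] (csA : CoxeterSystem (CoxeterMatrix.Aₙ 3) WA)
    (w : WA) (ω : List (Fin 3)) (hw : csA.wordProd ω = w) (n : ℕ) (hn : ω.length = n)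
    (hex : ∀ k, k < n → (ω.map gA).prod ∉ prodsA k) : csA.length w = n := by
  have hle : csA.length w ≤ n := hw ▸ hn ▸ csA.length_wordProd_le ω
  rcases Nat.lt_or_ge (csA.length w) n with hlt | hge
  · exfalso
    obtain ⟨ω', hlen, hw'⟩ := csA.exists_reduced_word w
    have : (ω'.map gA).prod = (ω.map gA).prod := by
      rw [← piA_wordProd csA ω', ← piA_wordProd csA ω, hw, ← hw']
    exact hex ω'.length (by subst hw'; have := hlen.eq; omega) (this ▸ mem_prodsA ω')
  · omega

/-- Images of the two generators of `B₂` in `S₄` (the folded embedding). -/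
def gB : Fin 2 → Equiv.Perm (Fin 4) :=
  ![Equiv.swap 0 1 * Equiv.swap 2 3, Equiv.swap 1 2]

lemma gB_liftable : CoxeterMatrix.IsLiftable (CoxeterMatrix.Bₙ 2) gB := by
  intro i i'
  fin_cases i <;> fin_cases i' <;> decide

/-- The q-integer `[k]_p = 1 + p + ⋯ + p^(k-1)` evaluated at a polynomial `p`. -/
noncomputable def qint (p : Polynomial ℤ) (k : ℕ) : Polynomial ℤ := ∑ i ∈ Finset.range k, p ^ i

set_option maxHeartbeats 1000000 in
/-- For the folded embedding `φ : B₂ → A₃` with `φ(r₁) = s₁s₃` and `φ(r₂) = s₂`,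
the unfolding polynomial is `∑_{w ∈ B₂} q^{ℓ_A(φ(w))} = [2]_q [3]_{-q} [4]_q`. -/
theorem stmt_4 {WB WA : Type*} [Group WB] [Group WA]
    (csB : CoxeterSystem (CoxeterMatrix.Bₙ 2) WB)
    (csA : CoxeterSystem (CoxeterMatrix.Aₙ 3) WA)
    (φ : WB →* WA)
    (h1 : φ (csB.simple 0) = csA.simple 0 * csA.simple 2)
    (h2 : φ (csB.simple 1) = csA.simple 1) :
    ∑ᶠ w : WB, (X : Polynomial ℤ) ^ (csA.length (φ w)) =
      qint X 2 * qint (-X) 3 * qint X 4 := by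
  classical
  set a := csB.simple 0 with ha_def
  set b := csB.simple 1 with hb_def
  have haa : a * a = 1 := csB.simple_mul_simple_self 0
  have hbb : b * b = 1 := csB.simple_mul_simple_self 1
  have h4 : (a * b) ^ 4 = 1 := by
    have h := csB.simple_mul_simple_pow 0 1
    have hM : (CoxeterMatrix.Bₙ 2) 0 1 = 4 := by decide
    rwa [hM] at h
  have key : a * b * a * b = b * a * b * a := by
    have h2' : (a * b) ^ 2 * (a * b) ^ 2 = 1 := by rw [← pow_add]; exact h4
    have hinv : (a * b) ^ 2 = ((a * b) ^ 2)⁻¹ := by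
      rw [eq_inv_iff_mul_eq_one]; exact h2'
    have hainv : a⁻¹ = a := csB.inv_simple 0
    have hbinv : b⁻¹ = b := csB.inv_simple 1
    calc a * b * a * b = (a * b) ^ 2 := by rw [pow_two, ← mul_assoc]
      _ = ((a * b) ^ 2)⁻¹ := hinv
      _ = b * a * b * a := by
          rw [pow_two, mul_inv_rev, mul_inv_rev, hainv, hbinv, ← mul_assoc]
  -- product identities
  have e3 : a * (a * b) = b := by rw [← mul_assoc, haa, one_mul]
  have e4 : a * (b * a) = a * b * a := by rw [mul_assoc]
  have e5 : a * (a * b * a) = b * a := by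
    simp only [← mul_assoc]; rw [haa, one_mul]
  have e6 : a * (b * a * b) = a * b * a * b := by simp only [← mul_assoc]
  have e7 : a * (a * b * a * b) = b * a * b := by
    simp only [← mul_assoc]; rw [haa, one_mul]
  have f3 : b * (a * b) = b * a * b := by rw [mul_assoc]
  have f4 : b * (b * a) = a := by rw [← mul_assoc, hbb, one_mul]
  have f5 : b * (a * b * a) = a * b * a * b := by
    simp only [← mul_assoc]; rw [← key]
  have f6 : b * (b * a * b) = a * b := by
    simp only [← mul_assoc]; rw [hbb, one_mul]
  have f7 : b * (a * b * a * b) = a * b * a := by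
    calc b * (a * b * a * b) = b * a * b * a * b := by simp only [← mul_assoc]
      _ = a * b * a * b * b := by rw [← key]
      _ = a * b * a * (b * b) := by rw [mul_assoc (a*b*a) b b]
      _ = a * b * a := by rw [hbb, mul_one]
  -- the eight elements
  set u : Finset WB := {1, a, b, a*b, b*a, a*b*a, b*a*b, a*b*a*b} with hu_def
  have cover : ∀ w : WB, w ∈ u := by
    intro w
    obtain ⟨ω, rfl⟩ := csB.wordProd_surjective w
    induction ω with
    | nil => rw [csB.wordProd_nil]; simp [hu_def]
    | cons i ω ih =>
      rw [csB.wordProd_cons]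
      simp only [hu_def, Finset.mem_insert, Finset.mem_singleton] at ih ⊢
      fin_cases i
      · rcases ih with h|h|h|h|h|h|h|h <;> rw [h] <;>
          simp only [← ha_def, mul_one, haa, e3, e4, e5, e6, e7] <;> tauto
      · rcases ih with h|h|h|h|h|h|h|h <;> rw [h] <;>
          simp only [← hb_def, mul_one, hbb, f3, f4, f5, f6, f7] <;> tauto
  -- distinctness via the concrete representation
  set πB : WB →* Equiv.Perm (Fin 4) := csB.lift ⟨gB, gB_liftable⟩ with hπB
  have pa : πB a = gB 0 := csB.lift_apply_simple gB_liftable 0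
  have pb : πB b = gB 1 := csB.lift_apply_simple gB_liftable 1
  have n1 : (1 : WB) ∉ ({a, b, a*b, b*a, a*b*a, b*a*b, a*b*a*b} : Finset WB) := by
    simp only [Finset.mem_insert, Finset.mem_singleton, not_or]
    refine ⟨?_,?_,?_,?_,?_,?_,?_⟩ <;>
      (intro h; apply_fun πB at h;
       simp only [map_one, map_mul, pa, pb] at h; revert h; decide)
  have n2 : a ∉ ({b, a*b, b*a, a*b*a, b*a*b, a*b*a*b} : Finset WB) := by
    simp only [Finset.mem_insert, Finset.mem_singleton, not_or]
    refine ⟨?_,?_,?_,?_,?_,?_⟩ <;>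
      (intro h; apply_fun πB at h;
       simp only [map_one, map_mul, pa, pb] at h; revert h; decide)
  have n3 : b ∉ ({a*b, b*a, a*b*a, b*a*b, a*b*a*b} : Finset WB) := by
    simp only [Finset.mem_insert, Finset.mem_singleton, not_or]
    refine ⟨?_,?_,?_,?_,?_⟩ <;>
      (intro h; apply_fun πB at h;
       simp only [map_one, map_mul, pa, pb] at h; revert h; decide)
  have n4 : a*b ∉ ({b*a, a*b*a, b*a*b, a*b*a*b} : Finset WB) := by
    simp only [Finset.mem_insert, Finset.mem_singleton, not_or]
    refine ⟨?_,?_,?_,?_⟩ <;>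
      (intro h; apply_fun πB at h;
       simp only [map_one, map_mul, pa, pb] at h; revert h; decide)
  have n5 : b*a ∉ ({a*b*a, b*a*b, a*b*a*b} : Finset WB) := by
    simp only [Finset.mem_insert, Finset.mem_singleton, not_or]
    refine ⟨?_,?_,?_⟩ <;>
      (intro h; apply_fun πB at h;
       simp only [map_one, map_mul, pa, pb] at h; revert h; decide)
  have n6 : a*b*a ∉ ({b*a*b, a*b*a*b} : Finset WB) := by
    simp only [Finset.mem_insert, Finset.mem_singleton, not_or]
    refine ⟨?_,?_⟩ <;>
      (intro h; apply_fun πB at h;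
       simp only [map_one, map_mul, pa, pb] at h; revert h; decide)
  have n7 : b*a*b ∉ ({a*b*a*b} : Finset WB) := by
    simp only [Finset.mem_singleton]
    intro h; apply_fun πB at h
    simp only [map_one, map_mul, pa, pb] at h; revert h; decide
  -- lengths of images
  have l1 : csA.length (φ 1) = 0 := by rw [map_one, csA.length_one]
  have la : csA.length (φ a) = 2 := by
    refine lenA_eq csA _ [0, 2] ?_ 2 rfl ?_
    · simp [CoxeterSystem.wordProd_cons, CoxeterSystem.wordProd_nil, h1]
    · intro k hk; interval_cases k <;> decide
  have lb : csA.length (φ b) = 1 := by rw [h2, csA.length_simple]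
  have lab : csA.length (φ (a*b)) = 3 := by
    refine lenA_eq csA _ [0, 2, 1] ?_ 3 rfl ?_
    · simp [CoxeterSystem.wordProd_cons, CoxeterSystem.wordProd_nil,
        map_mul, h1, h2, mul_assoc]
    · intro k hk; interval_cases k <;> decide
  have lba : csA.length (φ (b*a)) = 3 := by
    refine lenA_eq csA _ [1, 0, 2] ?_ 3 rfl ?_
    · simp [CoxeterSystem.wordProd_cons, CoxeterSystem.wordProd_nil,
        map_mul, h1, h2, mul_assoc]
    · intro k hk; interval_cases k <;> decide
  have laba : csA.length (φ (a*b*a)) = 5 := by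
    refine lenA_eq csA _ [0, 2, 1, 0, 2] ?_ 5 rfl ?_
    · simp [CoxeterSystem.wordProd_cons, CoxeterSystem.wordProd_nil,
        map_mul, h1, h2, mul_assoc]
    · intro k hk; interval_cases k <;> decide
  have lbab : csA.length (φ (b*a*b)) = 4 := by
    refine lenA_eq csA _ [1, 0, 2, 1] ?_ 4 rfl ?_
    · simp [CoxeterSystem.wordProd_cons, CoxeterSystem.wordProd_nil,
        map_mul, h1, h2, mul_assoc]
    · intro k hk; interval_cases k <;> decide
  have labab : csA.length (φ (a*b*a*b)) = 6 := by
    refine lenA_eq csA _ [0, 2, 1, 0, 2, 1] ?_ 6 rfl ?_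
    · simp [CoxeterSystem.wordProd_cons, CoxeterSystem.wordProd_nil,
        map_mul, h1, h2, mul_assoc]
    · intro k hk; interval_cases k <;> decide
  -- evaluate the sum
  have hsum : ∑ᶠ w : WB, (X : Polynomial ℤ) ^ (csA.length (φ w)) =
      ∑ w ∈ u, (X : Polynomial ℤ) ^ (csA.length (φ w)) := by
    apply finsum_eq_finset_sum_of_support_subset
    intro w _
    exact cover w
  rw [hsum, hu_def]
  rw [Finset.sum_insert n1, Finset.sum_insert n2, Finset.sum_insert n3,
    Finset.sum_insert n4, Finset.sum_insert n5, Finset.sum_insert n6,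
    Finset.sum_insert n7, Finset.sum_singleton]
  rw [l1, la, lb, lab, lba, laba, lbab, labab]
  simp only [qint, Finset.sum_range_succ, Finset.sum_range_zero]
  ring
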